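/- If c_k ≥ 2, i.e., the kernel of A^(k) has dimension at least 2, and X_A is k-selfdual, then there exist two nonzero 0-1 vectors with disjoint supports in the row span of A; consequently, for k ≥ 2 the rank of A^(k) is strictly less than binom(n+k,k) (X_A is not generically k-jet spanned). -/

import Mathlib

open Matrix
open scoped Classical

lemma finAux (n k : ℕ) : Finite {α : Fin n → ℕ // ∑ i, α i ≤ k} := by
  apply Finite.of_injective (fun α : {α : Fin n → ℕ // ∑ i, α i ≤ k} =>
    (fun i => (⟨α.1 i, by
      have h1 : α.1 i ≤ ∑ i, α.1 i :=
        Finset.single_le_sum (fun _ _ => Nat.zero_le _) (Finset.mem_univ i)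
      have := α.2; omega⟩ : Fin (k+1))))
  intro a b hab
  ext i
  exact congrArg Fin.val (congrFun hab i)

lemma cardAux (n k : ℕ) [Fintype {α : Fin n → ℕ // ∑ i, α i ≤ k}] :
    Fintype.card {α : Fin n → ℕ // ∑ i, α i ≤ k} = (n + k).choose k := by
  have e1 : {α : Fin n → ℕ // ∑ i, α i ≤ k} ≃ {P : Fin (n+1) → ℕ // ∑ i, P i = k} :=
    { toFun := fun α => ⟨Fin.cons (k - ∑ i, α.1 i) α.1, by
        rw [Fin.sum_cons]; have := α.2; omega⟩
      invFun := fun P => ⟨fun i => P.1 i.succ, by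
        have := P.2; rw [Fin.sum_univ_succ] at this
        show ∑ i : Fin n, P.1 i.succ ≤ k
        omega⟩
      left_inv := fun α => by ext i; simp
      right_inv := fun P => by
        ext i
        refine Fin.cases ?_ ?_ i
        · have := P.2; rw [Fin.sum_univ_succ] at this; simp; omega
        · intro i'; simp }
  haveI : Finite {P : Fin (n+1) → ℕ // ∑ i, P i = k} := Finite.of_equiv _ e1
  haveI : Fintype {P : Fin (n+1) → ℕ // ∑ i, P i = k} := Fintype.ofFinite _
  rw [Fintype.card_congr e1,
    Fintype.card_congr (Sym.equivNatSumOfFintype (Fin (n+1)) k).symm,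
    Sym.card_sym_eq_multichoose, Nat.multichoose_eq]
  simp

/-- Proposition 3.5(iii): if `c_k = dim Ker A^(k) ≥ 2` and `X_A` is `k`-selfdual (the
configuration is knap and, per Theorem 3.4, the indicator vector of each collinearity class
of the `b_i` lies in the row span of `A`), then there are two nonzero `0-1` vectors with
disjoint supports in the row span of `A`, and consequently for `k ≥ 2` the rank of `A^(k)`
is strictly less than `binom(n+k,k)` (`X_A` is not generically `k`-jet spanned). -/
theorem stmt18 (n N k : ℕ) (A : Matrix (Fin (n + 1)) (Fin (N + 1)) ℤ)
    (h1 : ∀ j, A 0 j = 1) :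
    let Ak : Matrix {α : Fin n → ℕ // ∑ i, α i ≤ k} (Fin (N + 1)) ℚ :=
      Matrix.of fun α j => ∏ i, (A i.succ j : ℚ) ^ (α.1 i)
    let rowspan : Submodule ℚ (Fin (N + 1) → ℚ) :=
      Submodule.span ℚ (Set.range fun i j => (A i j : ℚ))
    let Rel : Fin (N + 1) → Fin (N + 1) → Prop := fun i i' =>
      ∃ t : ℚ, (∀ w, Ak.mulVec w = 0 → w i = t * w i') ∨
               (∀ w, Ak.mulVec w = 0 → w i' = t * w i)
    2 ≤ Module.finrank ℚ ↥(LinearMap.ker Ak.mulVecLin) →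
    (∃ v, Ak.mulVec v = 0 ∧ ∀ j, v j ≠ 0) →
    (∀ i₀, (fun i => if Rel i i₀ then (1 : ℚ) else 0) ∈ rowspan) →
    (∃ e e' : Fin (N + 1) → ℚ,
      (∀ j, e j = 0 ∨ e j = 1) ∧ (∀ j, e' j = 0 ∨ e' j = 1) ∧
      e ≠ 0 ∧ e' ≠ 0 ∧ (∀ j, e j = 0 ∨ e' j = 0) ∧
      e ∈ rowspan ∧ e' ∈ rowspan) ∧
    (2 ≤ k → Ak.rank < (n + k).choose k) := by
  intro Ak rowspan Rel h2 hv hind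
  obtain ⟨v, hv0, hvne⟩ := hv
  -- canonical form of Rel
  have relIff : ∀ i i', Rel i i' ↔
      ∃ t : ℚ, t ≠ 0 ∧ ∀ w, Ak.mulVec w = 0 → w i = t * w i' := by
    intro i i'
    constructor
    · rintro ⟨t, h | h⟩
      · refine ⟨t, ?_, h⟩
        intro ht0
        have := h v hv0
        rw [ht0, zero_mul] at this
        exact hvne i this
      · have htne : t ≠ 0 := by
          intro ht0
          have := h v hv0
          rw [ht0, zero_mul] at this
          exact hvne i' this
        refine ⟨t⁻¹, inv_ne_zero htne, fun w hw => ?_⟩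
        rw [h w hw, inv_mul_cancel_left₀ htne]
    · rintro ⟨t, -, h⟩
      exact ⟨t, Or.inl h⟩
  have relRefl : ∀ i, Rel i i := fun i =>
    ⟨1, Or.inl fun w _ => (one_mul _).symm⟩
  -- there is an index not related to 0
  have hi1 : ∃ i₁, ¬ Rel i₁ 0 := by
    by_contra hno
    push_neg at hno
    have hinj : Function.Injective
        ((LinearMap.proj 0 : (Fin (N+1) → ℚ) →ₗ[ℚ] ℚ).comp
          (LinearMap.ker Ak.mulVecLin).subtype) := by
      intro w w' h
      apply Subtype.ext
      have hker : Ak.mulVec (w.1 - w'.1) = 0 := by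
        have := map_sub Ak.mulVecLin w.1 w'.1
        have hw : Ak.mulVecLin w.1 = 0 := w.2
        have hw' : Ak.mulVecLin w'.1 = 0 := w'.2
        rw [← Matrix.mulVecLin_apply, this, hw, hw', sub_zero]
      have h0 : (w.1 - w'.1) 0 = 0 := by
        have : w.1 0 = w'.1 0 := h
        simp [this]
      have : w.1 - w'.1 = 0 := by
        funext i
        obtain ⟨t, -, hwt⟩ := (relIff i 0).1 (hno i)
        rw [Pi.zero_apply, hwt _ hker, h0, mul_zero]
      exact sub_eq_zero.mp this
    have hle : Module.finrank ℚ ↥(LinearMap.ker Ak.mulVecLin) ≤ 1 := by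
      have := LinearMap.finrank_le_finrank_of_injective hinj
      simpa using this
    omega
  obtain ⟨i₁, hi1⟩ := hi1
  set e : Fin (N+1) → ℚ := fun i => if Rel i 0 then 1 else 0 with he
  set e' : Fin (N+1) → ℚ := fun i => if Rel i i₁ then 1 else 0 with he'
  have he01 : ∀ j, e j = 0 ∨ e j = 1 := by
    intro j; by_cases h : Rel j 0 <;> simp [he, h]
  have he'01 : ∀ j, e' j = 0 ∨ e' j = 1 := by
    intro j; by_cases h : Rel j i₁ <;> simp [he', h]
  have hene : e ≠ 0 := by
    intro h
    have := congrFun h 0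
    rw [he] at this
    simp [if_pos (relRefl 0)] at this
  have he'ne : e' ≠ 0 := by
    intro h
    have := congrFun h i₁
    rw [he'] at this
    simp [if_pos (relRefl i₁)] at this
  have hdis : ∀ j, e j = 0 ∨ e' j = 0 := by
    intro j
    by_cases hj0 : Rel j 0
    · by_cases hji : Rel j i₁
      · exfalso
        apply hi1
        obtain ⟨t, htne, ht⟩ := (relIff j 0).1 hj0
        obtain ⟨s, hsne, hs⟩ := (relIff j i₁).1 hji
        refine (relIff i₁ 0).2 ⟨s⁻¹ * t, mul_ne_zero (inv_ne_zero hsne) htne,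
          fun w hw => ?_⟩
        rw [mul_assoc, ← ht w hw, hs w hw, inv_mul_cancel_left₀ hsne]
      · right; simp [he', hji]
    · left; simp [he, hj0]
  refine ⟨⟨e, e', he01, he'01, hene, he'ne, hdis, hind 0, hind i₁⟩, ?_⟩
  -- part 2
  intro hk
  set p : Fin (N+1) → (Fin n → ℚ) := fun j i => ((A i.succ j : ℤ) : ℚ) with hp
  have claimA : ∀ x, x ∈ rowspan → ∃ q : MvPolynomial (Fin n) ℚ,
      q.totalDegree ≤ 1 ∧ ∀ j, MvPolynomial.eval (p j) q = x j := by
    intro x hx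
    induction hx using Submodule.span_induction with
    | mem x hx =>
        obtain ⟨i, rfl⟩ := hx
        refine Fin.cases ?_ ?_ i
        · exact ⟨1, by simp, fun j => by simp [h1 j]⟩
        · intro i'
          exact ⟨MvPolynomial.X i', le_of_eq (MvPolynomial.totalDegree_X i'),
            fun j => by simp [hp]⟩
    | zero => exact ⟨0, by simp, fun j => by simp⟩
    | add x y _ _ ihx ihy =>
        obtain ⟨qx, hx1, hx2⟩ := ihx
        obtain ⟨qy, hy1, hy2⟩ := ihy
        exact ⟨qx + qy, le_trans (MvPolynomial.totalDegree_add _ _) (max_le hx1 hy1),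
          fun j => by simp [hx2, hy2]⟩
    | smul c x _ ih =>
        obtain ⟨qx, hx1, hx2⟩ := ih
        exact ⟨c • qx, le_trans (MvPolynomial.totalDegree_smul_le _ _) hx1,
          fun j => by simp [hx2]⟩
  obtain ⟨q, hqdeg, hqev⟩ := claimA e (hind 0)
  obtain ⟨q', hq'deg, hq'ev⟩ := claimA e' (hind i₁)
  have hqne : q ≠ 0 := by
    intro h
    exact hene (funext fun j => by rw [← hqev j, h, map_zero, Pi.zero_apply])
  have hq'ne : q' ≠ 0 := by
    intro h
    exact he'ne (funext fun j => by rw [← hq'ev j, h, map_zero, Pi.zero_apply])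
  have hqqne : q * q' ≠ 0 := mul_ne_zero hqne hq'ne
  have hdegqq : (q * q').totalDegree ≤ k := by
    have := MvPolynomial.totalDegree_mul q q'
    omega
  have hzero : ∀ j, MvPolynomial.eval (p j) (q * q') = 0 := by
    intro j
    rw [_root_.map_mul, hqev, hq'ev]
    rcases hdis j with h | h <;> simp [h]
  haveI : Finite {α : Fin n → ℕ // ∑ i, α i ≤ k} := finAux n k
  haveI : Fintype {α : Fin n → ℕ // ∑ i, α i ≤ k} := Fintype.ofFinite _
  have hmemk : ∀ β ∈ (q * q').support, ∑ i, β i ≤ k := by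
    intro β hβ
    have h := (MvPolynomial.le_totalDegree hβ).trans hdegqq
    rwa [Finsupp.sum_fintype _ _ (fun i => rfl)] at h
  have hrow : ∀ (α : {α : Fin n → ℕ // ∑ i, α i ≤ k}) j,
      Ak α j = ∏ i, p j i ^ α.1 i := fun α j => rfl
  -- the linear relation among the rows of Ak
  have hrel : ∑ α : {α : Fin n → ℕ // ∑ i, α i ≤ k},
      (MvPolynomial.coeff (Finsupp.equivFunOnFinite.symm α.1) (q * q')) • Ak α = 0 := by
    funext j
    rw [Finset.sum_apply, Pi.zero_apply]
    simp only [Pi.smul_apply]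
    have hg : Function.Injective
        (fun α : {α : Fin n → ℕ // ∑ i, α i ≤ k} => Finsupp.equivFunOnFinite.symm α.1) := by
      intro a b hab
      exact Subtype.ext (Finsupp.equivFunOnFinite.symm.injective hab)
    have himg : ∑ β ∈ Finset.univ.image
          (fun α : {α : Fin n → ℕ // ∑ i, α i ≤ k} => Finsupp.equivFunOnFinite.symm α.1),
          MvPolynomial.coeff β (q * q') * ∏ i, p j i ^ β i
        = ∑ α : {α : Fin n → ℕ // ∑ i, α i ≤ k},
          (MvPolynomial.coeff (Finsupp.equivFunOnFinite.symm α.1) (q * q')) • Ak α j := by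
      rw [Finset.sum_image (fun a _ b _ h => hg h)]
      refine Finset.sum_congr rfl fun α _ => ?_
      rw [hrow, smul_eq_mul]
      simp [Finsupp.coe_equivFunOnFinite_symm]
    rw [← himg]
    have hsub : (q * q').support ⊆ Finset.univ.image
        (fun α : {α : Fin n → ℕ // ∑ i, α i ≤ k} => Finsupp.equivFunOnFinite.symm α.1) := by
      intro β hβ
      refine Finset.mem_image.2 ⟨⟨Finsupp.equivFunOnFinite β, ?_⟩, Finset.mem_univ _, ?_⟩
      · simpa using hmemk β hβ
      · simp
    rw [← Finset.sum_subset hsub (fun β _ hβ => by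
      rw [MvPolynomial.notMem_support_iff.mp hβ, zero_mul])]
    rw [← MvPolynomial.eval_eq']
    exact hzero j
  have hnotind : ¬ LinearIndependent ℚ (fun α : {α : Fin n → ℕ // ∑ i, α i ≤ k} => Ak α) := by
    intro hli
    obtain ⟨β, hβ⟩ := Finset.nonempty_of_ne_empty
      (fun h => hqqne (MvPolynomial.support_eq_empty.mp h))
    have hβk : ∑ i, (Finsupp.equivFunOnFinite β) i ≤ k := by simpa using hmemk β hβ
    have := Fintype.linearIndependent_iff.mp hli
      (fun α => MvPolynomial.coeff (Finsupp.equivFunOnFinite.symm α.1) (q * q')) hrel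
      ⟨Finsupp.equivFunOnFinite β, hβk⟩
    simp only [Equiv.symm_apply_apply] at this
    exact MvPolynomial.mem_support_iff.mp hβ this
  have hcard := cardAux n k
  calc Ak.rank
      = Module.finrank ℚ (Submodule.span ℚ (Set.range fun α => Ak α)) := by
        rw [Matrix.rank_eq_finrank_span_row Ak]
        rfl
    _ < Fintype.card {α : Fin n → ℕ // ∑ i, α i ≤ k} := by
        refine lt_of_le_of_ne (finrank_range_le_card _) fun h => hnotind ?_
        exact linearIndependent_iff_card_eq_finrank_span.mpr h.symm
    _ = (n + k).choose k := hcard
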